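/- Let p, q ∈ (1,∞). Then the infinite product ∏_{n=1}^{∞} (1 − 1/(p·n·(q·n + 1 − q/p)))^{−1} converges and equals π_{p,q}/2. Equivalently, π_{p,q}/2 = lim_{N→∞} ∏_{n=1}^{N} [p·n·(q·n + 1 − q/p)] / [(p·n − 1)·(q·n + 1)]. -/

import Mathlib

open Set MeasureTheory Filter

open Topology in
private lemma realBeta_aux (a b : ℝ) (ha : 0 < a) (hb : 0 < b) :
    ∫ x in (0:ℝ)..1, x ^ (a-1) * (1-x) ^ (b-1)
      = Real.Gamma a * Real.Gamma b / Real.Gamma (a+b) := by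
  have key := Complex.Gamma_mul_Gamma_eq_betaIntegral (s := (a:ℂ)) (t := (b:ℂ))
    (by simpa using ha) (by simpa using hb)
  have hbeta : Complex.betaIntegral a b
      = ((∫ x in (0:ℝ)..1, x ^ (a-1) * (1-x) ^ (b-1) : ℝ) : ℂ) := by
    rw [Complex.betaIntegral, ← intervalIntegral.integral_ofReal]
    apply intervalIntegral.integral_congr
    intro x hx
    rw [uIcc_of_le zero_le_one] at hx
    push_cast
    rw [Complex.ofReal_cpow hx.1 (a-1),
      Complex.ofReal_cpow (by linarith [hx.2] : (0:ℝ) ≤ 1 - x) (b-1)]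
    push_cast
    ring
  rw [hbeta, ← Complex.ofReal_add] at key
  rw [Complex.Gamma_ofReal, Complex.Gamma_ofReal, Complex.Gamma_ofReal] at key
  have hR : Real.Gamma a * Real.Gamma b
      = Real.Gamma (a+b) * ∫ x in (0:ℝ)..1, x ^ (a-1) * (1-x) ^ (b-1) := by
    exact_mod_cast key
  have hpos : 0 < Real.Gamma (a+b) := Real.Gamma_pos_of_pos (by positivity)
  rw [hR]
  field_simp

private lemma subst_aux (p q : ℝ) (hq : 1 < q) :
    ∫ t in (0:ℝ)..1, (1 - t ^ q) ^ (-(1/p))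
      = (1/q) * ∫ x in (0:ℝ)..1, x ^ (1/q - 1) * (1-x) ^ (-(1/p)) := by
  have hq0 : (0:ℝ) < q := lt_trans one_pos hq
  set g : ℝ → ℝ := fun t => (1 - t ^ q) ^ (-(1/p)) with hg
  have himg : (fun x : ℝ => x ^ (1/q)) '' Ioo 0 1 = Ioo (0:ℝ) 1 := by
    ext y
    constructor
    · rintro ⟨x, hx, rfl⟩
      exact ⟨Real.rpow_pos_of_pos hx.1 _,
        Real.rpow_lt_one hx.1.le hx.2 (by positivity)⟩
    · rintro hy
      refine ⟨y ^ q, ⟨Real.rpow_pos_of_pos hy.1 _, Real.rpow_lt_one hy.1.le hy.2 hq0⟩, ?_⟩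
      show (y ^ q) ^ (1/q) = y
      rw [← Real.rpow_mul hy.1.le, mul_one_div_cancel hq0.ne', Real.rpow_one]
  have hderiv : ∀ x ∈ Ioo (0:ℝ) 1,
      HasDerivWithinAt (fun x : ℝ => x ^ (1/q)) (1/q * x ^ (1/q - 1)) (Ioo 0 1) x := by
    intro x hx
    exact (Real.hasDerivAt_rpow_const (Or.inl hx.1.ne')).hasDerivWithinAt
  have hinj : InjOn (fun x : ℝ => x ^ (1/q)) (Ioo 0 1) :=
    (Real.rpow_left_injOn (one_div_ne_zero hq0.ne')).mono (fun x hx => le_of_lt hx.1)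
  have key := integral_image_eq_integral_abs_deriv_smul measurableSet_Ioo hderiv hinj g
  rw [himg] at key
  have h1 : ∫ t in (0:ℝ)..1, g t = ∫ t in Ioo (0:ℝ) 1, g t := by
    rw [intervalIntegral.integral_of_le zero_le_one, integral_Ioc_eq_integral_Ioo]
  have h2 : ∫ x in Ioo (0:ℝ) 1, |1/q * x ^ (1/q - 1)| • g (x ^ (1/q))
      = ∫ x in Ioo (0:ℝ) 1, (1/q) * (x ^ (1/q - 1) * (1-x) ^ (-(1/p))) := by
    apply setIntegral_congr_fun measurableSet_Ioo
    intro x hx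
    have hx0 := hx.1
    have hxq : (x ^ (1/q) : ℝ) ^ q = x := by
      rw [← Real.rpow_mul hx0.le, one_div_mul_cancel hq0.ne', Real.rpow_one]
    simp only [smul_eq_mul, hg]
    rw [hxq, abs_of_pos (by positivity)]
    ring
  have h3 : ∫ x in (0:ℝ)..1, x ^ (1/q - 1) * (1-x) ^ (-(1/p))
      = ∫ x in Ioo (0:ℝ) 1, x ^ (1/q - 1) * (1-x) ^ (-(1/p)) := by
    rw [intervalIntegral.integral_of_le zero_le_one, integral_Ioc_eq_integral_Ioo]
  rw [h1, key, h2, h3, MeasureTheory.integral_const_mul]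

private lemma prodPos_aux (x : ℝ) (hx : 0 < x) (N : ℕ) :
    0 < ∏ j ∈ Finset.range N, (x + (j:ℝ)) :=
  Finset.prod_pos fun j _ => by positivity

private lemma prodIdent_aux (a b : ℝ) (ha : 0 < a) (hb : 0 < b) (N : ℕ) :
    ∏ n ∈ Finset.Icc 1 N, ((n:ℝ) * ((n:ℝ) + a + b - 1)) / (((n:ℝ) + b - 1) * ((n:ℝ) + a))
      = a * (N.factorial : ℝ) * (∏ j ∈ Finset.range N, (a + b + (j:ℝ)))
        / ((∏ j ∈ Finset.range N, (b + (j:ℝ))) * ∏ j ∈ Finset.range (N+1), (a + (j:ℝ))) := by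
  induction N with
  | zero => simp [ha.ne']
  | succ N ih =>
    rw [Finset.prod_Icc_succ_top (Nat.le_add_left 1 N), ih,
      Finset.prod_range_succ (fun j => (a + b + (j:ℝ))),
      Finset.prod_range_succ (fun j => (b + (j:ℝ))),
      Finset.prod_range_succ (fun j => (a + (j:ℝ))) (N+1), Nat.factorial_succ]
    have h1 : (0:ℝ) < ∏ j ∈ Finset.range N, (a + b + (j:ℝ)) := prodPos_aux _ (by linarith) N
    have h2 : (0:ℝ) < ∏ j ∈ Finset.range N, (b + (j:ℝ)) := prodPos_aux _ hb N
    have h3 : (0:ℝ) < ∏ j ∈ Finset.range (N+1), (a + (j:ℝ)) := prodPos_aux _ ha (N+1)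
    have h4 : (0:ℝ) < (N.factorial : ℝ) := by exact_mod_cast N.factorial_pos
    have h5 : (0:ℝ) < ((N:ℝ) + 1) + b - 1 := by linarith
    have h6 : (0:ℝ) < ((N:ℝ) + 1) + a := by linarith
    have h7 : (0:ℝ) < b + (N:ℝ) := by positivity
    have h8 : (0:ℝ) < a + ((N:ℝ)+1) := by positivity
    push_cast
    field_simp
    ring

open Topology in
private lemma prodTendsto_aux (a b : ℝ) (ha : 0 < a) (hb : 0 < b) :
    Tendsto (fun N : ℕ => ∏ n ∈ Finset.Icc 1 N,
        ((n:ℝ) * ((n:ℝ) + a + b - 1)) / (((n:ℝ) + b - 1) * ((n:ℝ) + a)))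
      atTop (𝓝 (a * (Real.Gamma a * Real.Gamma b / Real.Gamma (a+b)))) := by
  have hc : (0:ℝ) < a + b := by linarith
  have hΓc : Real.Gamma (a+b) ≠ 0 := (Real.Gamma_pos_of_pos hc).ne'
  have hQ : Tendsto (fun N => Real.GammaSeq a N * Real.GammaSeq b N / Real.GammaSeq (a+b) N)
      atTop (𝓝 (Real.Gamma a * Real.Gamma b / Real.Gamma (a+b))) :=
    (((Real.GammaSeq_tendsto_Gamma a).mul (Real.GammaSeq_tendsto_Gamma b)).div
      (Real.GammaSeq_tendsto_Gamma (a+b)) hΓc)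
  have hatTop : Tendsto (fun N : ℕ => a + b + (N:ℝ)) atTop atTop :=
    tendsto_atTop_add_const_left atTop (a+b) tendsto_natCast_atTop_atTop
  have h0 : Tendsto (fun N : ℕ => a / (a + b + (N:ℝ))) atTop (𝓝 0) :=
    hatTop.const_div_atTop a
  have hfrac : Tendsto (fun N : ℕ => (b + (N:ℝ))/(a + b + (N:ℝ))) atTop (𝓝 1) := by
    have heq : ∀ N : ℕ, (b + (N:ℝ))/(a + b + (N:ℝ)) = 1 - a / (a + b + (N:ℝ)) := by
      intro N
      have : (0:ℝ) < a + b + N := by positivity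
      field_simp
      ring
    simp only [heq]
    simpa using (tendsto_const_nhds (x := (1:ℝ)) (f := atTop)).sub h0
  have hlim := ((tendsto_const_nhds (x := a) (f := atTop)).mul hfrac).mul hQ
  rw [mul_one] at hlim
  apply hlim.congr'
  filter_upwards [eventually_ge_atTop 1] with N hN
  have hNR : (0:ℝ) < N := by exact_mod_cast hN
  rw [prodIdent_aux a b ha hb N, Real.GammaSeq, Real.GammaSeq, Real.GammaSeq,
    Finset.prod_range_succ (fun j => (b + (j:ℝ))),
    Finset.prod_range_succ (fun j => (a + b + (j:ℝ))),
    Real.rpow_add hNR]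
  have h1 : (0:ℝ) < ∏ j ∈ Finset.range N, (a + b + (j:ℝ)) := prodPos_aux _ hc N
  have h2 : (0:ℝ) < ∏ j ∈ Finset.range N, (b + (j:ℝ)) := prodPos_aux _ hb N
  have h3 : (0:ℝ) < ∏ j ∈ Finset.range (N+1), (a + (j:ℝ)) := prodPos_aux _ ha (N+1)
  have h4 : (0:ℝ) < (N.factorial : ℝ) := by exact_mod_cast N.factorial_pos
  have h5 : (0:ℝ) < (N:ℝ) ^ a := Real.rpow_pos_of_pos hNR a
  have h6 : (0:ℝ) < (N:ℝ) ^ b := Real.rpow_pos_of_pos hNR b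
  have h7 : (0:ℝ) < b + (N:ℝ) := by positivity
  have h8 : (0:ℝ) < a + b + (N:ℝ) := by positivity
  field_simp

/-- Generalized arcsine: `arcsin_{p,q}(x) = ∫₀ˣ (1 - tᵠ)^(-1/p) dt`. -/
noncomputable def gArcsin (p q x : ℝ) : ℝ := ∫ t in (0:ℝ)..x, (1 - t ^ q) ^ (-(1 / p))

/-- Generalized pi: `π_{p,q} = 2 ∫₀¹ (1 - tᵠ)^(-1/p) dt`. -/
noncomputable def gPi (p q : ℝ) : ℝ := 2 * gArcsin p q 1

/-- `S` is the generalized sine `sin_{p,q}` (the inverse of `gArcsin p q` on `[0,1]`). -/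
def IsGSin (p q : ℝ) (S : ℝ → ℝ) : Prop :=
  ∀ y ∈ Icc (0:ℝ) 1, S (gArcsin p q y) = y

/-- `C` is the generalized cosine `cos_{p,q}`, the derivative of `S = sin_{p,q}`
on `[0, π_{p,q}/2]`. -/
def IsGCos (p q : ℝ) (S C : ℝ → ℝ) : Prop :=
  ∀ x ∈ Icc (0:ℝ) (gPi p q / 2), HasDerivWithinAt S (C x) (Icc (0:ℝ) (gPi p q / 2)) x

/-- Theorem 3.8 (product formula for `π_{p,q}`): the infinite product
`∏_{n≥1} (1 - 1/(pn(qn+1-q/p)))⁻¹` converges to `π_{p,q}/2`; equivalently the partial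
products `∏_{n=1}^N pn(qn+1-q/p)/((pn-1)(qn+1))` converge to `π_{p,q}/2`. -/
theorem stmt_16 (p q : ℝ) (hp : 1 < p) (hq : 1 < q) :
    Tendsto
      (fun N : ℕ => ∏ n ∈ Finset.Icc 1 N,
        (1 - 1 / (p * (n : ℝ) * (q * (n : ℝ) + 1 - q / p)))⁻¹)
      atTop (nhds (gPi p q / 2)) ∧
    Tendsto
      (fun N : ℕ => ∏ n ∈ Finset.Icc 1 N,
        (p * (n : ℝ) * (q * (n : ℝ) + 1 - q / p)) /
          ((p * (n : ℝ) - 1) * (q * (n : ℝ) + 1)))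
      atTop (nhds (gPi p q / 2)) := by
  have hp0 : (0:ℝ) < p := lt_trans one_pos hp
  have hq0 : (0:ℝ) < q := lt_trans one_pos hq
  have ha : (0:ℝ) < 1/q := by positivity
  have hpinv : 1/p < 1 := by rw [div_lt_one hp0]; exact hp
  have hb : (0:ℝ) < 1 - 1/p := by linarith
  -- the value of the limit
  have hval : gPi p q / 2
      = (1/q) * (Real.Gamma (1/q) * Real.Gamma (1-1/p) / Real.Gamma (1/q + (1-1/p))) := by
    have hrb := realBeta_aux (1/q) (1-1/p) ha hb
    have he : (1 - 1/p) - 1 = -(1/p) := by ring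
    rw [he] at hrb
    have h0 : gPi p q / 2 = ∫ t in (0:ℝ)..1, (1 - t ^ q) ^ (-(1 / p)) := by
      rw [gPi, gArcsin]; ring
    rw [h0, subst_aux p q hq, hrb]
  have hkey : Tendsto (fun N : ℕ => ∏ n ∈ Finset.Icc 1 N,
        ((n:ℝ) * ((n:ℝ) + 1/q + (1-1/p) - 1)) / (((n:ℝ) + (1-1/p) - 1) * ((n:ℝ) + 1/q)))
      atTop (nhds (gPi p q / 2)) := by
    rw [hval]
    exact prodTendsto_aux (1/q) (1-1/p) ha hb
  -- per-term identities
  have hterm : ∀ n : ℕ, 1 ≤ n →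
      ((n:ℝ) * ((n:ℝ) + 1/q + (1-1/p) - 1)) / (((n:ℝ) + (1-1/p) - 1) * ((n:ℝ) + 1/q))
        = (p * (n : ℝ) * (q * (n : ℝ) + 1 - q / p)) /
            ((p * (n : ℝ) - 1) * (q * (n : ℝ) + 1)) := by
    intro n hn
    have hn1 : (1:ℝ) ≤ (n:ℝ) := by exact_mod_cast hn
    have hd1 : (0:ℝ) < ((n:ℝ) + (1-1/p) - 1) := by
      have : 1/p < (n:ℝ) := lt_of_lt_of_le hpinv hn1
      linarith
    have hd2 : (0:ℝ) < (n:ℝ) + 1/q := by positivity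
    have hd3 : (0:ℝ) < p * (n:ℝ) - 1 := by nlinarith
    have hd4 : (0:ℝ) < q * (n:ℝ) + 1 := by nlinarith
    rw [div_eq_div_iff (by positivity) (by positivity)]
    field_simp
    ring
  have hDpos : ∀ n : ℕ, 1 ≤ n → (0:ℝ) < p * (n : ℝ) * (q * (n : ℝ) + 1 - q / p) := by
    intro n hn
    have hn1 : (1:ℝ) ≤ (n:ℝ) := by exact_mod_cast hn
    have h1 : q / p < q := by
      rw [div_lt_iff₀ hp0]
      nlinarith
    have : (0:ℝ) < q * (n:ℝ) + 1 - q / p := by nlinarith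
    positivity
  have hterm1 : ∀ n : ℕ, 1 ≤ n →
      (1 - 1 / (p * (n : ℝ) * (q * (n : ℝ) + 1 - q / p)))⁻¹
        = (p * (n : ℝ) * (q * (n : ℝ) + 1 - q / p)) /
            ((p * (n : ℝ) - 1) * (q * (n : ℝ) + 1)) := by
    intro n hn
    have hn1 : (1:ℝ) ≤ (n:ℝ) := by exact_mod_cast hn
    have hD := hDpos n hn
    have hDm1 : p * (n : ℝ) * (q * (n : ℝ) + 1 - q / p) - 1
        = (p * (n : ℝ) - 1) * (q * (n : ℝ) + 1) := by
      field_simp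
      ring
    rw [one_sub_div hD.ne', inv_div, hDm1]
  constructor
  · refine hkey.congr fun N => Finset.prod_congr rfl fun n hn => ?_
    rw [hterm n (Finset.mem_Icc.mp hn).1, ← hterm1 n (Finset.mem_Icc.mp hn).1]
  · refine hkey.congr fun N => Finset.prod_congr rfl fun n hn => ?_
    exact hterm n (Finset.mem_Icc.mp hn).1
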